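/- Let G = (V,E) be a finite undirected simple graph, h a positive integer, v ∈ V, u ∈ N_v^h(G) with s = dis_G(u,v), and w ∈ N_v^{h-s}(G) with w ≠ u. Suppose dis_{G(V \ {v})}(u,w) ≤ h. Then every shortest path between u and w in G(V \ {v}) is contained in the subgraph induced by N_v^h(G): for every shortest path P from u to w in G(V \ {v}) and every vertex w_i on P, one has w_i ∈ N_v^h(G) (equivalently, dis_G(v, w_i) ≤ h). -/

import Mathlib

open SimpleGraph

variable {V : Type*} [Fintype V] [DecidableEq V]

/-- The subgraph of `G` induced by the vertex set `S`, viewed as a graph on the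
same vertex type (edges are exactly the edges of `G` with both endpoints in `S`). -/
def SimpleGraph.inducedOn (G : SimpleGraph V) (S : Set V) : SimpleGraph V where
  Adj x y := G.Adj x y ∧ x ∈ S ∧ y ∈ S
  symm := ⟨fun _ _ ⟨ha, hx, hy⟩ => ⟨ha.symm, hy, hx⟩⟩
  loopless := ⟨fun x ⟨ha, _, _⟩ => G.ne_of_adj ha rfl⟩

/-- The `h`-hop neighborhood of `v` in `G`:
all vertices `u ≠ v` with `dis_G(v,u) ≤ h`. -/
def SimpleGraph.hNbhd (G : SimpleGraph V) (h : ℕ) (v : V) : Set V :=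
  {u | u ≠ v ∧ G.edist v u ≤ (h : ℕ∞)}

/-- The `h`-degree of `v` in `G`: the number of vertices in its `h`-hop neighborhood. -/
noncomputable def SimpleGraph.hDeg (G : SimpleGraph V) (h : ℕ) (v : V) : ℕ :=
  (G.hNbhd h v).ncard

lemma inducedOn_support_mem {G : SimpleGraph V} {S : Set V} {a b : V}
    (p : (G.inducedOn S).Walk a b) (ha : a ∈ S) : ∀ x ∈ p.support, x ∈ S := by
  induction p with
  | nil => simpa using ha
  | cons e q ih =>
    intro x hx
    rw [Walk.support_cons, List.mem_cons] at hx
    rcases hx with rfl | hx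
    · exact ha
    · exact ih (show G.Adj _ _ ∧ _ ∈ S ∧ _ ∈ S from e).2.2 x hx

/-- Theorem 1: all shortest paths between `u ∈ N_v^h(G)` and `w ∈ N_v^{h-s}(G)` in
`G(V∖{v})` of length at most `h` are contained in the subgraph induced by `N_v^h(G)`. -/
theorem stmt5 (G : SimpleGraph V) (h : ℕ) (hpos : 0 < h) (v u w : V) (s : ℕ)
    (hu : u ∈ G.hNbhd h v) (hs : G.edist u v = (s : ℕ∞))
    (hw : w ∈ G.hNbhd (h - s) v) (hwu : w ≠ u)
    (hle : (G.inducedOn {v}ᶜ).edist u w ≤ (h : ℕ∞)) :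
    ∀ p : (G.inducedOn {v}ᶜ).Walk u w, p.IsPath →
      (p.length : ℕ∞) = (G.inducedOn {v}ᶜ).edist u w →
      ∀ x ∈ p.support, x ∈ G.hNbhd h v := by
  intro p _hp hlen x hx
  obtain ⟨huv, hvu_le⟩ := hu
  obtain ⟨hwv, hvw_le⟩ := hw
  have hGG' : G.inducedOn {v}ᶜ ≤ G := fun a b hab => (show G.Adj a b ∧ a ∈ _ ∧ b ∈ _ from hab).1
  -- every support vertex is ≠ v
  have hxv : x ≠ v := by
    have := inducedOn_support_mem p (by simpa using huv) x hx
    simpa using this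
  refine ⟨hxv, ?_⟩
  -- split the path at x
  have hsplit : (p.takeUntil x hx).length + (p.dropUntil x hx).length = p.length := by
    have := congrArg Walk.length (p.take_spec hx)
    rwa [Walk.length_append] at this
  set a := (p.takeUntil x hx).length with ha
  set b := (p.dropUntil x hx).length with hb
  have hA : (G.inducedOn {v}ᶜ).edist u x ≤ (a : ℕ∞) := Walk.edist_le _
  have hB : (G.inducedOn {v}ᶜ).edist x w ≤ (b : ℕ∞) := Walk.edist_le _
  have h1 : G.edist v x ≤ ((s + a : ℕ) : ℕ∞) := by
    calc G.edist v x ≤ G.edist v u + G.edist u x := SimpleGraph.edist_triangle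
      _ ≤ (s : ℕ∞) + (a : ℕ∞) := by
          refine add_le_add ?_ (le_trans (edist_anti hGG') hA)
          rw [SimpleGraph.edist_comm]; exact hs.le
      _ = ((s + a : ℕ) : ℕ∞) := by push_cast; ring
  have h2 : G.edist v x ≤ (((h - s) + b : ℕ) : ℕ∞) := by
    calc G.edist v x ≤ G.edist v w + G.edist w x := SimpleGraph.edist_triangle
      _ ≤ ((h - s : ℕ) : ℕ∞) + (b : ℕ∞) := by
          refine add_le_add hvw_le ?_
          rw [SimpleGraph.edist_comm]; exact le_trans (edist_anti hGG') hB
      _ = (((h - s) + b : ℕ) : ℕ∞) := by push_cast; ring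
  have hsh : s ≤ h := by
    have : (s : ℕ∞) ≤ (h : ℕ∞) := by rw [← hs, SimpleGraph.edist_comm]; exact hvu_le
    exact_mod_cast this
  have habh : a + b ≤ h := by
    have : (p.length : ℕ∞) ≤ (h : ℕ∞) := hlen ▸ hle
    have hpl : p.length ≤ h := by exact_mod_cast this
    omega
  by_contra hnot
  push_neg at hnot
  have hc1 : h < s + a := by exact_mod_cast lt_of_lt_of_le hnot h1
  have hc2 : h < (h - s) + b := by exact_mod_cast lt_of_lt_of_le hnot h2
  omega
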